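/- (Lemma 2) Let a ≥ 2 be an integer, let n be a positive integer divisible by a, and let χ be a 2-coloring of [1,n]. Then Q ≤ |R|·|B|/a + #{ordered pairs (x,y) with 1 ≤ x, y ≤ n, y − ax ≥ 0, and χ(x) ≠ χ(y)} + #{ordered pairs (x,y) with 1 ≤ x, y, y + ax ≤ n, and χ(x) ≠ χ(y)}, where Q is twice the number of non-monochromatic (x,y,x+ay) triples. -/

import Mathlib

open Finset

/-- size of a residue class mod `a` inside `[1,n]` when `a ∣ n`. -/
lemma class_card (a n : ℕ) (ha : 0 < a) (hdvd : a ∣ n) (i : ℕ) (hi : i < a) :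
    ((Finset.Icc 1 n).filter (fun x => x % a = i)).card = n / a := by
  obtain ⟨m, rfl⟩ := hdvd
  rw [Nat.mul_div_cancel_left _ ha]
  set r := if i = 0 then a else i with hr
  have hr1 : 1 ≤ r := by rw [hr]; split <;> omega
  have hra : r ≤ a := by rw [hr]; split <;> omega
  have hrm : r % a = i := by
    rw [hr]; split
    · simp [Nat.mod_self]; omega
    · exact Nat.mod_eq_of_lt hi
  conv_rhs => rw [← Finset.card_range m]
  apply Finset.card_bij' (fun x _ => (x - r) / a) (fun k _ => a * k + r)
  · intro x hx
    simp only [mem_filter, mem_Icc] at hx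
    simp only [mem_range]
    rw [Nat.div_lt_iff_lt_mul ha]
    have : a * m = m * a := Nat.mul_comm a m
    omega
  · intro k hk
    simp only [mem_range] at hk
    simp only [mem_filter, mem_Icc]
    refine ⟨⟨by omega, ?_⟩, ?_⟩
    · calc a * k + r ≤ a * k + a := by omega
        _ = a * (k + 1) := by ring
        _ ≤ a * m := Nat.mul_le_mul_left a (by omega)
    · rw [Nat.mul_add_mod, hrm]
  · intro x hx
    simp only [mem_filter, mem_Icc] at hx
    have hrx : r ≤ x := by
      rw [hr]; split
      · rename_i h0
        subst h0
        have : a ∣ x := Nat.dvd_of_mod_eq_zero hx.2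
        exact Nat.le_of_dvd (by omega) this
      · have := Nat.mod_le x a
        omega
    have hdvd2 : a ∣ x - r := Nat.dvd_of_mod_eq_zero
      (Nat.sub_mod_eq_zero_of_mod_eq (by rw [hx.2, hrm]))
    rw [Nat.mul_div_cancel' hdvd2]
    omega
  · intro k hk
    rw [Nat.add_sub_cancel, Nat.mul_div_cancel_left _ ha]

lemma rb_sum_le (a m : ℕ) (ha : 0 < a) (r b : ℕ → ℕ)
    (h : ∀ i ∈ Finset.range a, r i + b i = m) :
    (∑ i ∈ Finset.range a, ((r i : ℝ) * (b i : ℝ))) ≤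
      (∑ i ∈ Finset.range a, (r i : ℝ)) * (∑ i ∈ Finset.range a, (b i : ℝ)) / a := by
  set R := ∑ i ∈ Finset.range a, (r i : ℝ) with hR
  set B := ∑ i ∈ Finset.range a, (b i : ℝ) with hB
  set S := ∑ i ∈ Finset.range a, (r i : ℝ) ^ 2 with hS
  have hb : ∀ i ∈ Finset.range a, (b i : ℝ) = m - r i := by
    intro i hi
    have h2 : (r i : ℝ) + b i = m := by exact_mod_cast congrArg (Nat.cast (R := ℝ)) (h i hi)
    linarith
  have hBeq : B = a * m - R := by
    rw [hB, hR, Finset.sum_congr rfl hb, Finset.sum_sub_distrib]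
    simp [mul_comm]
  have hCS : R ^ 2 ≤ a * S := by
    have := sq_sum_le_card_mul_sum_sq (s := Finset.range a) (f := fun i => (r i : ℝ))
    simpa [hR, hS] using this
  have hsum : ∑ i ∈ Finset.range a, ((r i : ℝ) * (b i : ℝ)) = m * R - S := by
    calc ∑ i ∈ Finset.range a, ((r i : ℝ) * (b i : ℝ))
        = ∑ i ∈ Finset.range a, ((m : ℝ) * r i - (r i : ℝ) ^ 2) :=
          Finset.sum_congr rfl (fun i hi => by rw [hb i hi]; ring)
      _ = m * R - S := by rw [Finset.sum_sub_distrib, Finset.mul_sum]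
  rw [le_div_iff₀ (by exact_mod_cast ha : (0:ℝ) < a), hsum, hBeq]
  nlinarith [hCS]

/-- The number of non-monochromatic `(x, y, x + a*y)` triples of the 2-coloring `χ`
of `[1, n]`: ordered pairs `(x, y)` of positive integers with `x + a*y ≤ n` such
that `x, y, x + a*y` do not all receive the same color. -/
def nonMonoTriples (a n : ℕ) (χ : ℕ → Bool) : ℕ :=
  ((Finset.Icc 1 n ×ˢ Finset.Icc 1 n).filter
    (fun p => p.1 + a * p.2 ≤ n ∧
      ¬(χ p.1 = χ p.2 ∧ χ p.2 = χ (p.1 + a * p.2)))).card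

set_option maxHeartbeats 2000000 in
/-- (Lemma 2) For `a ≥ 2`, `a ∣ n`, and a 2-coloring `χ` of `[1,n]`
(`true` = red, `false` = blue): twice the number of non-monochromatic triples is
at most `|R|·|B|/a` plus the number of bichromatic ordered pairs `(x,y)` in
`[1,n]²` with `y − a·x ≥ 0` plus the number of bichromatic ordered pairs `(x,y)`
with `y + a·x ≤ n`. -/
theorem lemma_two (a n : ℕ) (ha : 2 ≤ a) (hn : 0 < n) (hdvd : a ∣ n)
    (χ : ℕ → Bool) :
    (2 * nonMonoTriples a n χ : ℝ) ≤
      (((Finset.Icc 1 n).filter (fun x => χ x = true)).card : ℝ) *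
        (((Finset.Icc 1 n).filter (fun x => χ x = false)).card : ℝ) / a
      + (((Finset.Icc 1 n ×ˢ Finset.Icc 1 n).filter
          (fun p => a * p.1 ≤ p.2 ∧ χ p.1 ≠ χ p.2)).card : ℝ)
      + (((Finset.Icc 1 n ×ˢ Finset.Icc 1 n).filter
          (fun p => p.2 + a * p.1 ≤ n ∧ χ p.1 ≠ χ p.2)).card : ℝ) := by
  have ha0 : 0 < a := by omega
  set I := Finset.Icc 1 n with hI
  set T := (I ×ˢ I).filter
    (fun p => p.1 + a * p.2 ≤ n ∧
      ¬(χ p.1 = χ p.2 ∧ χ p.2 = χ (p.1 + a * p.2))) with hT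
  have key : ∀ p ∈ T, ((if χ p.1 ≠ χ p.2 then 1 else 0)
      + (if χ p.2 ≠ χ (p.1 + a * p.2) then 1 else 0)
      + (if χ p.1 ≠ χ (p.1 + a * p.2) then 1 else 0)) = 2 := by
    intro p hp
    rw [hT, Finset.mem_filter] at hp
    obtain ⟨-, -, hne⟩ := hp
    cases h1 : χ p.1 <;> cases h2 : χ p.2 <;> cases h3 : χ (p.1 + a * p.2) <;> simp_all
  have hsplit : 2 * T.card =
      (T.filter fun p => χ p.1 ≠ χ p.2).card +
      (T.filter fun p => χ p.2 ≠ χ (p.1 + a * p.2)).card +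
      (T.filter fun p => χ p.1 ≠ χ (p.1 + a * p.2)).card := by
    calc 2 * T.card = ∑ _p ∈ T, 2 := by rw [Finset.sum_const, smul_eq_mul, mul_comm]
      _ = ∑ p ∈ T, ((if χ p.1 ≠ χ p.2 then 1 else 0)
          + (if χ p.2 ≠ χ (p.1 + a * p.2) then 1 else 0)
          + (if χ p.1 ≠ χ (p.1 + a * p.2) then 1 else 0)) :=
        (Finset.sum_congr rfl key).symm
      _ = _ := by
        rw [Finset.sum_add_distrib, Finset.sum_add_distrib,
          ← Finset.card_filter, ← Finset.card_filter, ← Finset.card_filter]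
  -- injection into third pair set
  have hA1 : (T.filter fun p => χ p.1 ≠ χ p.2).card ≤
      ((I ×ˢ I).filter (fun p => p.2 + a * p.1 ≤ n ∧ χ p.1 ≠ χ p.2)).card := by
    apply Finset.card_le_card_of_injOn (fun p => (p.2, p.1))
    · intro p hp
      simp only [hT, Finset.mem_coe, Finset.mem_filter, Finset.mem_product] at hp ⊢
      exact ⟨⟨hp.1.1.2, hp.1.1.1⟩, hp.1.2.1, hp.2.symm⟩
    · intro p _ q _ h
      simp only [Prod.mk.injEq] at h
      exact Prod.ext h.2 h.1
  have hA2 : (T.filter fun p => χ p.2 ≠ χ (p.1 + a * p.2)).card ≤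
      ((I ×ˢ I).filter (fun p => a * p.1 ≤ p.2 ∧ χ p.1 ≠ χ p.2)).card := by
    apply Finset.card_le_card_of_injOn (fun p => (p.2, p.1 + a * p.2))
    · intro p hp
      simp only [hT, Finset.mem_coe, Finset.mem_filter, Finset.mem_product, Finset.mem_Icc, hI] at hp ⊢
      obtain ⟨⟨⟨h11, h12⟩, h21, h22⟩, hle, -⟩ := hp.1
      exact ⟨⟨⟨h21, h22⟩, by omega, hle⟩, by omega, hp.2⟩
    · intro p hp q hq h
      simp only [Prod.mk.injEq] at h
      obtain ⟨h1, h2⟩ := h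
      rw [h1] at h2
      exact Prod.ext (by omega) h1
  set D := (I ×ˢ I).filter
    (fun p => p.1 < p.2 ∧ a ∣ p.2 - p.1 ∧ χ p.1 ≠ χ p.2) with hD
  have hA3 : (T.filter fun p => χ p.1 ≠ χ (p.1 + a * p.2)).card ≤ D.card := by
    apply Finset.card_le_card_of_injOn (fun p => (p.1, p.1 + a * p.2))
    · intro p hp
      simp only [hT, Finset.mem_coe, hD, Finset.mem_filter, Finset.mem_product, Finset.mem_Icc, hI] at hp ⊢
      obtain ⟨⟨⟨h11, h12⟩, h21, h22⟩, hle, -⟩ := hp.1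
      have hpos : 0 < a * p.2 := Nat.mul_pos ha0 (by omega)
      refine ⟨⟨⟨h11, h12⟩, by omega, hle⟩, by omega, ⟨p.2, by omega⟩, hp.2⟩
    · intro p _ q _ h
      simp only [Prod.mk.injEq] at h
      obtain ⟨h1, h2⟩ := h
      rw [h1] at h2
      have := Nat.add_left_cancel h2
      exact Prod.ext h1 (Nat.eq_of_mul_eq_mul_left ha0 this)
  -- bound D via residue classes
  set Ri := fun i => I.filter (fun x => x % a = i ∧ χ x = true) with hRi
  set Bi := fun i => I.filter (fun x => x % a = i ∧ χ x = false) with hBi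
  have hDcard : D.card = ∑ i ∈ Finset.range a, (D.filter fun p => p.1 % a = i).card :=
    Finset.card_eq_sum_card_fiberwise (fun p _ => Finset.mem_range.mpr (Nat.mod_lt _ ha0))
  have hDi : ∀ i ∈ Finset.range a,
      (D.filter fun p => p.1 % a = i).card ≤ (Ri i).card * (Bi i).card := by
    intro i _
    rw [← Finset.card_product]
    apply Finset.card_le_card_of_injOn
      (fun p => if χ p.1 = true then (p.1, p.2) else (p.2, p.1))
    · intro p hp
      simp only [hD, Finset.mem_coe, Finset.mem_filter, Finset.mem_product] at hp
      obtain ⟨⟨⟨hp1, hp2⟩, hlt, ⟨k, hk⟩, hne⟩, hmod⟩ := hp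
      have hmod2 : p.2 % a = i := by
        have h2 : p.2 = p.1 + a * k := by omega
        rw [h2, Nat.add_mul_mod_self_left, hmod]
      by_cases hc : χ p.1 = true
      · have hc2 : χ p.2 = false := by cases hb : χ p.2 <;> simp_all
        simp only [Finset.mem_coe]; rw [if_pos hc]
        simp only [hRi, hBi, Finset.mem_product, Finset.mem_filter]
        exact ⟨⟨hp1, hmod, hc⟩, ⟨hp2, hmod2, hc2⟩⟩
      · have hc1 : χ p.1 = false := by cases hb : χ p.1 <;> simp_all
        have hc2 : χ p.2 = true := by cases hb : χ p.2 <;> simp_all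
        simp only [Finset.mem_coe]; rw [if_neg hc]
        simp only [hRi, hBi, Finset.mem_product, Finset.mem_filter]
        exact ⟨⟨hp2, hmod2, hc2⟩, ⟨hp1, hmod, hc1⟩⟩
    · intro p hp q hq h
      have hp' := Finset.mem_filter.mp (Finset.mem_coe.mp hp)
      have hq' := Finset.mem_filter.mp (Finset.mem_coe.mp hq)
      rw [hD] at hp' hq'
      have hp'' := Finset.mem_filter.mp hp'.1
      have hq'' := Finset.mem_filter.mp hq'.1
      have hplt : p.1 < p.2 := hp''.2.1
      have hqlt : q.1 < q.2 := hq''.2.1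
      dsimp only at h
      by_cases hc : χ p.1 = true <;> by_cases hc' : χ q.1 = true
      · rw [if_pos hc, if_pos hc'] at h
        simp only [Prod.mk.injEq] at h
        exact Prod.ext h.1 h.2
      · rw [if_pos hc, if_neg hc'] at h
        simp only [Prod.mk.injEq] at h
        exfalso; obtain ⟨h1, h2⟩ := h; omega
      · rw [if_neg hc, if_pos hc'] at h
        simp only [Prod.mk.injEq] at h
        exfalso; obtain ⟨h1, h2⟩ := h; omega
      · rw [if_neg hc, if_neg hc'] at h
        simp only [Prod.mk.injEq] at h
        exact Prod.ext h.2 h.1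
  have hcnt : ∀ i ∈ Finset.range a, (Ri i).card + (Bi i).card = n / a := by
    intro i hi
    rw [← class_card a n ha0 hdvd i (Finset.mem_range.mp hi)]
    have e1 : Ri i = (I.filter (fun x => x % a = i)).filter (fun x => χ x = true) := by
      rw [Finset.filter_filter]
    have e2 : Bi i = (I.filter (fun x => x % a = i)).filter (fun x => ¬ (χ x = true)) := by
      rw [Finset.filter_filter]
      apply Finset.filter_congr
      intro x _
      simp [Bool.not_eq_true]
    rw [e1, e2, Finset.card_filter_add_card_filter_not]
  have hred : (I.filter (fun x => χ x = true)).card = ∑ i ∈ Finset.range a, (Ri i).card := by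
    rw [Finset.card_eq_sum_card_fiberwise
      (f := fun x => x % a) (t := Finset.range a)
      (fun x _ => Finset.mem_range.mpr (Nat.mod_lt _ ha0))]
    refine Finset.sum_congr rfl fun i _ => ?_
    congr 1
    rw [Finset.filter_filter, hRi]
    apply Finset.filter_congr
    intro x _
    tauto
  have hblue : (I.filter (fun x => χ x = false)).card = ∑ i ∈ Finset.range a, (Bi i).card := by
    rw [Finset.card_eq_sum_card_fiberwise
      (f := fun x => x % a) (t := Finset.range a)
      (fun x _ => Finset.mem_range.mpr (Nat.mod_lt _ ha0))]
    refine Finset.sum_congr rfl fun i _ => ?_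
    congr 1
    rw [Finset.filter_filter, hBi]
    apply Finset.filter_congr
    intro x _
    tauto
  have hDle : (D.card : ℝ) ≤ ((I.filter (fun x => χ x = true)).card : ℝ)
      * ((I.filter (fun x => χ x = false)).card : ℝ) / a := by
    calc (D.card : ℝ) = ∑ i ∈ Finset.range a, ((D.filter fun p => p.1 % a = i).card : ℝ) := by
          rw [hDcard]; push_cast; ring
      _ ≤ ∑ i ∈ Finset.range a, ((Ri i).card : ℝ) * ((Bi i).card : ℝ) := by
          apply Finset.sum_le_sum
          intro i hi
          exact_mod_cast hDi i hi
      _ ≤ (∑ i ∈ Finset.range a, ((Ri i).card : ℝ))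
          * (∑ i ∈ Finset.range a, ((Bi i).card : ℝ)) / a :=
          rb_sum_le a (n / a) ha0 _ _ hcnt
      _ = _ := by rw [hred, hblue]; push_cast; ring
  have hnmt : nonMonoTriples a n χ = T.card := rfl
  have h2 : (2 * nonMonoTriples a n χ : ℝ)
      = ((T.filter fun p => χ p.1 ≠ χ p.2).card : ℝ)
      + ((T.filter fun p => χ p.2 ≠ χ (p.1 + a * p.2)).card : ℝ)
      + ((T.filter fun p => χ p.1 ≠ χ (p.1 + a * p.2)).card : ℝ) := by
    rw [hnmt]
    exact_mod_cast congrArg (Nat.cast (R := ℝ)) hsplit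
  have c1 : ((T.filter fun p => χ p.1 ≠ χ p.2).card : ℝ)
      ≤ (((I ×ˢ I).filter (fun p => p.2 + a * p.1 ≤ n ∧ χ p.1 ≠ χ p.2)).card : ℝ) := by
    exact_mod_cast hA1
  have c2 : ((T.filter fun p => χ p.2 ≠ χ (p.1 + a * p.2)).card : ℝ)
      ≤ (((I ×ˢ I).filter (fun p => a * p.1 ≤ p.2 ∧ χ p.1 ≠ χ p.2)).card : ℝ) := by
    exact_mod_cast hA2
  have c3 : ((T.filter fun p => χ p.1 ≠ χ (p.1 + a * p.2)).card : ℝ)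
      ≤ ((I.filter (fun x => χ x = true)).card : ℝ)
        * ((I.filter (fun x => χ x = false)).card : ℝ) / a :=
    le_trans (by exact_mod_cast hA3) hDle
  linarith
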